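/- In the quotient semiring N[x]/(x = 1 + x + x^2), for each n with 1 ≤ n ≤ 3, the identity 1 + x^2 + x^n = x^n holds. -/

import Mathlib

open Polynomial

private noncomputable abbrev myc : RingCon (Polynomial ℕ) :=
  ringConGen (fun p q : Polynomial ℕ => p = X ∧ q = 1 + X + X ^ 2)

private lemma myc_base : myc X (1 + X + X ^ 2) :=
  RingConGen.Rel.of _ _ ⟨rfl, rfl⟩

private lemma myc_eq {a b a' b' : Polynomial ℕ} (h : myc a b) (ha : a = a') (hb : b = b') :
    myc a' b' := ha ▸ hb ▸ h

private lemma myc1 : myc (1 + X ^ 2 + X) X :=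
  (myc_eq myc_base rfl (by ring)).symm

private lemma mycmul : myc (X ^ 2) (X + X ^ 2 + X ^ 3) :=
  myc_eq (myc.mul (myc.refl X) myc_base) (by ring) (by ring)

private lemma myc2 : myc (1 + X ^ 2 + X ^ 2) (X ^ 2) := by
  have h1 : myc (1 + X ^ 2 + X ^ 2) ((1 + X ^ 2 + X) + (X ^ 2 + X ^ 3)) :=
    myc_eq (myc.add (myc.refl (1 + X ^ 2)) mycmul) rfl (by ring)
  have h2 : myc ((1 + X ^ 2 + X) + (X ^ 2 + X ^ 3)) (X + (X ^ 2 + X ^ 3)) :=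
    myc.add myc1 (myc.refl _)
  exact h1.trans (h2.trans (myc_eq mycmul rfl (by ring)).symm)

private lemma myc3 : myc (1 + X ^ 2 + X ^ 3) (X ^ 3) := by
  have hm : myc (X ^ 3) (X ^ 2 + X ^ 3 + X ^ 4) :=
    myc_eq (myc.mul (myc.refl (X ^ 2)) myc_base) (by ring) (by ring)
  have h1 : myc (1 + X ^ 2 + X ^ 3) ((1 + X ^ 2 + X ^ 2) + (X ^ 3 + X ^ 4)) :=
    myc_eq (myc.add (myc.refl (1 + X ^ 2)) hm) rfl (by ring)
  have h2 : myc ((1 + X ^ 2 + X ^ 2) + (X ^ 3 + X ^ 4)) (X ^ 2 + (X ^ 3 + X ^ 4)) :=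
    myc.add myc2 (myc.refl _)
  exact h1.trans (h2.trans (myc_eq hm rfl (by ring)).symm)

/-- In `ℕ[x]/(x = 1 + x + x²)`: for `1 ≤ n ≤ 3`, `1 + x² + xⁿ = xⁿ`. -/
theorem stmt_6 :
    ∀ n : ℕ, 1 ≤ n → n ≤ 3 →
      (ringConGen (fun p q : Polynomial ℕ => p = X ∧ q = 1 + X + X ^ 2))
        (1 + X ^ 2 + X ^ n) (X ^ n) := by
  intro n h1 h3
  interval_cases n
  · exact myc_eq myc1 (by ring) (by ring)
  · exact myc2
  · exact myc3
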